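/- arXiv:2001.09606 — 3 statements merged into one kernel-verified Lean document; each statement's English description precedes it below -/
import Mathlib

section
/- Let s ∈ ℂ with Re(s) > 0 and let θ ∈ (−3π/2, −π/2). Then ∫₀^∞ exp(r e^{iθ}) r^{s−1} e^{isθ} dr = e^{−iπ s} Γ(s); in particular this ray integral is independent of θ in the stated range. -/
open Set MeasureTheory

private lemma aux_real_int {a c : ℝ} (ha : 0 < a) (hc : 0 < c) :
    IntegrableOn (fun r : ℝ => Real.exp (-(c * r)) * r ^ (a - 1)) (Ioi 0) := by
  have h0 : IntegrableOn (fun r : ℝ => Real.exp (-r) * r ^ (a - 1)) (Ioi 0) :=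
    Real.GammaIntegral_convergent ha
  have h1 : IntegrableOn (fun r : ℝ => Real.exp (-(c * r)) * (c * r) ^ (a - 1)) (Ioi 0) := by
    have := (integrableOn_Ioi_comp_mul_left_iff
      (fun r : ℝ => Real.exp (-r) * r ^ (a - 1)) 0 hc).mpr (by simpa using h0)
    simpa using this
  have h2 : IntegrableOn (fun r : ℝ => c ^ (a - 1) * (Real.exp (-(c * r)) * r ^ (a - 1)))
      (Ioi 0) := by
    apply h1.congr_fun _ measurableSet_Ioi
    intro x hx
    simp only
    rw [Real.mul_rpow hc.le (le_of_lt hx)]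
    ring
  have h3 : IntegrableOn
      (fun r : ℝ => (c ^ (a - 1))⁻¹ * (c ^ (a - 1) * (Real.exp (-(c * r)) * r ^ (a - 1))))
      (Ioi 0) := h2.const_mul _
  apply h3.congr_fun _ measurableSet_Ioi
  intro x hx
  have : c ^ (a - 1) ≠ 0 := (Real.rpow_pos_of_pos hc _).ne'
  field_simp

private lemma aux_integrable (s : ℂ) (hs : 0 < s.re) {b : ℂ} (hb : 0 < b.re) :
    IntegrableOn (fun r : ℝ => Complex.exp (-(b * r)) * (r : ℂ) ^ (s - 1)) (Ioi 0) := by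
  have hbound := aux_real_int hs hb
  refine hbound.mono' ?_ ?_
  · exact ((Complex.measurable_exp.comp ((measurable_const.mul Complex.measurable_ofReal).neg)).mul
      (Complex.measurable_ofReal.pow_const _)).aestronglyMeasurable
  · rw [MeasureTheory.ae_restrict_iff' measurableSet_Ioi]
    refine Filter.Eventually.of_forall fun x hx => ?_
    rw [mem_Ioi] at hx
    rw [norm_mul, Complex.norm_exp,
      Complex.norm_cpow_eq_rpow_re_of_pos hx]
    simp [Complex.sub_re]

private lemma aux_eq (s : ℂ) (hs : 0 < s.re) {b : ℂ} (hb : 0 < b.re) :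
    ∫ r : ℝ in Ioi 0, Complex.exp (-(b * r)) * (r : ℂ) ^ (s - 1)
      = b ^ (-s) * Complex.Gamma s := by
  set f : ℂ → ℂ := fun b => ∫ r : ℝ in Ioi 0, Complex.exp (-(b * r)) * (r : ℂ) ^ (s - 1) with hf
  set g : ℂ → ℂ := fun b => b ^ (-s) * Complex.Gamma s with hg
  set U : Set ℂ := {z | 0 < z.re} with hU
  have hUopen : IsOpen U := isOpen_lt continuous_const Complex.continuous_re
  -- f is differentiable on U
  have hfd : DifferentiableOn ℂ f U := by
    intro b₀ hb₀
    refine (DifferentiableAt.differentiableWithinAt ?_)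
    have hb₀' : 0 < b₀.re := hb₀
    have hε : 0 < b₀.re / 2 := half_pos hb₀'
    have key := hasDerivAt_integral_of_dominated_loc_of_deriv_le (μ := volume.restrict (Ioi 0))
      (F := fun b (r : ℝ) => Complex.exp (-(b * r)) * (r : ℂ) ^ (s - 1))
      (F' := fun b (r : ℝ) => -r * (Complex.exp (-(b * r)) * (r : ℂ) ^ (s - 1)))
      (x₀ := b₀) (s := Metric.ball b₀ (b₀.re / 2))
      (bound := fun r : ℝ => Real.exp (-(b₀.re / 2 * r)) * r ^ (s.re + 1 - 1)) (Metric.ball_mem_nhds b₀ hε) ?_ ?_ ?_ ?_ ?_ ?_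
    · exact key.2.differentiableAt
    · refine Filter.Eventually.of_forall fun b => ?_
      exact ((Complex.measurable_exp.comp
        ((measurable_const.mul Complex.measurable_ofReal).neg)).mul
        (Complex.measurable_ofReal.pow_const _)).aestronglyMeasurable
    · exact aux_integrable s hs hb₀
    · exact ((Complex.measurable_ofReal.neg).mul ((Complex.measurable_exp.comp
        ((measurable_const.mul Complex.measurable_ofReal).neg)).mul
        (Complex.measurable_ofReal.pow_const _))).aestronglyMeasurable
    · rw [MeasureTheory.ae_restrict_iff' measurableSet_Ioi]
      refine Filter.Eventually.of_forall fun x hx => ?_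
      rw [mem_Ioi] at hx
      intro b hbmem
      have hbre : b₀.re / 2 ≤ b.re := by
        have h1 : |(b - b₀).re| ≤ ‖b - b₀‖ := Complex.abs_re_le_norm _
        rw [Metric.mem_ball, Complex.dist_eq] at hbmem
        have := abs_le.mp (h1.trans hbmem.le)
        simp only [Complex.sub_re] at this
        linarith [this.1]
      rw [norm_mul, norm_mul,
        Complex.norm_exp, Complex.norm_cpow_eq_rpow_re_of_pos hx]
      have h2 : ‖(-(x : ℂ))‖ = x := by
        simp [abs_of_pos hx]
      rw [h2]
      have h3 : (-(b * x)).re = -(b.re * x) := by simp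
      rw [h3]
      have h4 : x * (Real.exp (-(b.re * x)) * x ^ (s.re - 1))
          = Real.exp (-(b.re * x)) * x ^ (s.re + 1 - 1) := by
        rw [show s.re + 1 - 1 = 1 + (s.re - 1) by ring, Real.rpow_add hx, Real.rpow_one]
        ring
      rw [Complex.sub_re, Complex.one_re, h4]
      have h5 : -(b.re * x) ≤ -(b₀.re / 2 * x) := by nlinarith
      exact mul_le_mul_of_nonneg_right (Real.exp_le_exp.mpr h5)
        (Real.rpow_nonneg hx.le _)
    · exact aux_real_int (by linarith) hε
    · rw [MeasureTheory.ae_restrict_iff' measurableSet_Ioi]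
      refine Filter.Eventually.of_forall fun x hx b hbmem => ?_
      have h1 : HasDerivAt (fun b : ℂ => -(b * x)) (-x) b := by
        exact ((hasDerivAt_id' b).mul_const (x : ℂ)).neg.congr_deriv (by ring)
      have h2 := (h1.cexp).mul_const ((x : ℂ) ^ (s - 1))
      refine h2.congr_deriv ?_
      ring
  -- g is differentiable on U
  have hgd : DifferentiableOn ℂ g U := by
    intro b hbU
    refine DifferentiableAt.differentiableWithinAt ?_
    exact (((hasDerivAt_id b).cpow_const (Or.inl hbU)).differentiableAt.mul_const _)
  have hfa : AnalyticOnNhd ℂ f U := hfd.analyticOnNhd hUopen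
  have hga : AnalyticOnNhd ℂ g U := hgd.analyticOnNhd hUopen
  have hpre : IsPreconnected U := (convex_halfSpace_re_gt 0).isPreconnected
  have h1U : (1 : ℂ) ∈ U := by simp [hU]
  -- f = g on reals > 1 (in fact on reals > 0)
  have hreal : ∀ x : ℝ, 0 < x → f x = g x := by
    intro x hx
    have := Complex.integral_cpow_mul_exp_neg_mul_Ioi hs hx
    rw [hf, hg]
    simp only
    rw [show (fun r : ℝ => Complex.exp (-((x:ℂ) * r)) * (r : ℂ) ^ (s - 1))
      = fun t : ℝ => (t : ℂ) ^ (s - 1) * Complex.exp (-(x * t)) by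
        funext t; ring_nf]
    rw [this]
    congr 1
    have harg : (x : ℂ).arg ≠ Real.pi := by
      rw [Complex.arg_ofReal_of_nonneg hx.le]
      exact Real.pi_ne_zero.symm
    rw [one_div, Complex.inv_cpow _ _ harg, Complex.cpow_neg]
  have hfreq : ∃ᶠ z in nhdsWithin 1 {(1:ℂ)}ᶜ, f z = g z := by
    set u : ℕ → ℝ := fun n => 1 + ((n : ℝ) + 1)⁻¹ with hu
    have hu1 : Filter.Tendsto u Filter.atTop (nhds 1) := by
      have : Filter.Tendsto (fun n : ℕ => ((n:ℝ) + 1)⁻¹) Filter.atTop (nhds 0) :=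
        tendsto_one_div_add_atTop_nhds_zero_nat.congr (by intro n; rw [one_div])
      simpa using this.const_add (1 : ℝ)
    have htend : Filter.Tendsto (fun n : ℕ => ((u n : ℝ) : ℂ)) Filter.atTop
        (nhdsWithin 1 {(1:ℂ)}ᶜ) := by
      rw [tendsto_nhdsWithin_iff]
      constructor
      · simpa [Function.comp_def] using (Complex.continuous_ofReal.tendsto 1).comp hu1
      · refine Filter.Eventually.of_forall fun n => ?_
        simp only [Set.mem_compl_iff, Set.mem_singleton_iff]
        intro h
        have hne : u n ≠ 1 := by
          rw [hu]; simp only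
          have : (0:ℝ) < ((n:ℝ) + 1)⁻¹ := by positivity
          linarith
        exact hne (by exact_mod_cast h)
    refine htend.frequently (Filter.Eventually.of_forall fun n => ?_).frequently
    exact hreal (u n) (by rw [hu]; simp only; positivity)
  have := hfa.eqOn_of_preconnected_of_frequently_eq hga hpre h1U hfreq
  exact this hb

/-- Ray integral of `e^t t^(s-1)` at angle `θ ∈ (-3π/2, -π/2)`: it converges and equals
`e^(-iπs) Γ(s)`. -/
theorem ray_integral_lower (s : ℂ) (hs : 0 < s.re) (θ : ℝ)
    (hθ : θ ∈ Set.Ioo (-(3 * Real.pi / 2)) (-(Real.pi / 2))) :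
    MeasureTheory.IntegrableOn
      (fun r : ℝ => Complex.exp (r * Complex.exp (θ * Complex.I)) * (r : ℂ) ^ (s - 1) *
        Complex.exp (Complex.I * s * θ)) (Set.Ioi 0) ∧
    (∫ r : ℝ in Set.Ioi 0,
        Complex.exp (r * Complex.exp (θ * Complex.I)) * (r : ℂ) ^ (s - 1) *
          Complex.exp (Complex.I * s * θ))
      = Complex.exp (-(Complex.I * Real.pi * s)) * Complex.Gamma s := by
  obtain ⟨hθ1, hθ2⟩ := hθ
  set b : ℂ := -Complex.exp (θ * Complex.I) with hb
  have hcos : Real.cos θ < 0 := by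
    rw [← Real.cos_neg]
    exact Real.cos_neg_of_pi_div_two_lt_of_lt (by linarith) (by linarith)
  have hbre : 0 < b.re := by
    rw [hb]
    simp only [Complex.neg_re]
    rw [show (θ : ℂ) * Complex.I = (θ : ℝ) * Complex.I by norm_cast,
      Complex.exp_ofReal_mul_I_re]
    linarith
  -- rewrite the integrand
  have hcong : ∀ r : ℝ, Complex.exp (r * Complex.exp (θ * Complex.I)) * (r : ℂ) ^ (s - 1) *
      Complex.exp (Complex.I * s * θ)
      = Complex.exp (-(b * r)) * (r : ℂ) ^ (s - 1) * Complex.exp (Complex.I * s * θ) := by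
    intro r
    congr 2
    rw [hb]
    ring_nf
  have hint : IntegrableOn
      (fun r : ℝ => Complex.exp (-(b * r)) * (r : ℂ) ^ (s - 1) * Complex.exp (Complex.I * s * θ))
      (Ioi 0) := (aux_integrable s hs hbre).mul_const _
  constructor
  · exact hint.congr_fun (fun r _ => (hcong r).symm) measurableSet_Ioi
  · rw [MeasureTheory.setIntegral_congr_fun measurableSet_Ioi (fun r _ => hcong r)]
    rw [MeasureTheory.integral_mul_const, aux_eq s hs hbre]
    -- now compute b ^ (-s) * Γ s * exp(I s θ)
    have hbexp : b = Complex.exp (((θ : ℂ) + Real.pi) * Complex.I) := by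
      rw [hb, add_mul, Complex.exp_add, Complex.exp_pi_mul_I]
      ring
    have hlog : Complex.log b = ((θ : ℂ) + Real.pi) * Complex.I := by
      rw [hbexp, Complex.log_exp]
      · simp only [Complex.mul_im, Complex.add_re, Complex.ofReal_re, Complex.I_im,
          Complex.add_im, Complex.ofReal_im, Complex.I_re]
        norm_num
        linarith [Real.pi_pos]
      · simp only [Complex.mul_im, Complex.add_re, Complex.ofReal_re, Complex.I_im,
          Complex.add_im, Complex.ofReal_im, Complex.I_re]
        norm_num
        linarith [Real.pi_pos]
    have hbne : b ≠ 0 := by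
      intro h
      rw [h] at hbre
      simp at hbre
    rw [Complex.cpow_def_of_ne_zero hbne, hlog]
    have hkey : Complex.exp (((θ : ℂ) + Real.pi) * Complex.I * (-s)) *
        Complex.exp (Complex.I * s * θ) = Complex.exp (-(Complex.I * Real.pi * s)) := by
      rw [← Complex.exp_add]
      congr 1
      ring
    rw [show Complex.exp (((θ : ℂ) + Real.pi) * Complex.I * (-s)) * Complex.Gamma s *
        Complex.exp (Complex.I * s * θ)
      = Complex.exp (((θ : ℂ) + Real.pi) * Complex.I * (-s)) *
        Complex.exp (Complex.I * s * θ) * Complex.Gamma s by ring, hkey]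
end

section
/- Let s ∈ ℂ with Re(s) > 0, and let θ₁ ∈ (−3π/2, −π/2), θ₂ ∈ (π/2, 3π/2). Then (∫₀^∞ exp(r e^{iθ₂}) r^{s−1} e^{isθ₂} dr) − (∫₀^∞ exp(r e^{iθ₁}) r^{s−1} e^{isθ₁} dr) = 2i sin(πs) Γ(s) = 2πi / Γ(1 − s). -/
open Set MeasureTheory Complex Filter Metric

namespace HankelAux

lemma real_integrable {p c : ℝ} (hp : 0 < p) (hc : 0 < c) :
    IntegrableOn (fun t : ℝ => t ^ (p - 1) * Real.exp (-(c * t))) (Ioi 0) := by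
  have h0 := Real.GammaIntegral_convergent hp
  rw [← mul_zero c, ← integrableOn_Ioi_comp_mul_left_iff _ _ hc] at h0
  have h2 : IntegrableOn (fun x : ℝ => ((c : ℝ) ^ (p - 1))⁻¹ *
      (Real.exp (-(c * x)) * (c * x) ^ (p - 1))) (Ioi 0) := h0.const_mul _
  refine IntegrableOn.congr_fun h2 (fun x hx => ?_) measurableSet_Ioi
  have hx0 : (0 : ℝ) < x := hx
  have hcp : (0 : ℝ) < c ^ (p - 1) := Real.rpow_pos_of_pos hc _
  rw [Real.mul_rpow hc.le hx0.le]
  field_simp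

lemma measAux (s x : ℂ) :
    AEStronglyMeasurable (fun t : ℝ => Complex.exp (-(x * t)) * (t : ℂ) ^ (s - 1))
      (volume.restrict (Ioi 0)) := by
  refine ContinuousOn.aestronglyMeasurable (ContinuousOn.mul ?_ ?_) measurableSet_Ioi
  · exact (Complex.continuous_exp.comp
      ((continuous_const.mul Complex.continuous_ofReal).neg)).continuousOn
  · refine continuousOn_of_forall_continuousAt fun t ht => ?_
    exact (continuousAt_cpow_const (Complex.ofReal_mem_slitPlane.2 ht)).comp
      Complex.continuous_ofReal.continuousAt

lemma normAux {s x : ℂ} {t : ℝ} (ht : 0 < t) :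
    ‖Complex.exp (-(x * t)) * (t : ℂ) ^ (s - 1)‖ = Real.exp (-(x.re * t)) * t ^ (s.re - 1) := by
  rw [norm_mul, Complex.norm_exp,
    Complex.norm_cpow_eq_rpow_re_of_pos ht]
  have h1 : (-(x * (t : ℂ))).re = -(x.re * t) := by simp
  have h2 : (s - 1).re = s.re - 1 := by simp
  rw [h1, h2]

lemma intAux (s : ℂ) (hs : 0 < s.re) {x : ℂ} (hx : 0 < x.re) :
    IntegrableOn (fun t : ℝ => Complex.exp (-(x * t)) * (t : ℂ) ^ (s - 1)) (Ioi 0) := by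
  refine Integrable.mono' (real_integrable hs hx) (measAux s x) ?_
  filter_upwards [ae_restrict_mem measurableSet_Ioi] with t ht
  rw [normAux ht]
  exact le_of_eq (mul_comm _ _)

lemma hasDeriv (s : ℂ) (hs : 0 < s.re) {a₀ : ℂ} (ha₀ : 0 < a₀.re) :
    HasDerivAt (fun a : ℂ => ∫ t : ℝ in Ioi 0, Complex.exp (-(a * t)) * (t : ℂ) ^ (s - 1))
      (∫ t : ℝ in Ioi 0, -(t : ℂ) * (Complex.exp (-(a₀ * t)) * (t : ℂ) ^ (s - 1))) a₀ := by
  set ε : ℝ := a₀.re / 2 with hεdef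
  have hε : 0 < ε := by positivity
  have key := hasDerivAt_integral_of_dominated_loc_of_deriv_le (μ := volume.restrict (Ioi 0))
    (F := fun (a : ℂ) (t : ℝ) => Complex.exp (-(a * t)) * (t : ℂ) ^ (s - 1))
    (F' := fun (a : ℂ) (t : ℝ) => -(t : ℂ) * (Complex.exp (-(a * t)) * (t : ℂ) ^ (s - 1)))
    (bound := fun t : ℝ => t ^ (s.re + 1 - 1) * Real.exp (-(ε * t)))
    (ball_mem_nhds a₀ hε) (Eventually.of_forall fun x => measAux s x) (intAux s hs ha₀)
    ((Complex.continuous_ofReal.neg.aestronglyMeasurable).mul (measAux s a₀))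
    ?_ (real_integrable (by linarith) hε) ?_
  · exact key.2
  · filter_upwards [ae_restrict_mem measurableSet_Ioi] with t ht x hx
    have ht0 : (0 : ℝ) < t := ht
    have hxre : ε ≤ x.re := by
      have h1 : |(x - a₀).re| ≤ ‖x - a₀‖ := Complex.abs_re_le_norm _
      rw [mem_ball_iff_norm] at hx
      have := abs_lt.mp (h1.trans_lt hx)
      rw [Complex.sub_re] at this
      have := this.1
      simp only [hεdef] at *
      linarith
    have hcomb : t * t ^ (s.re - 1) = t ^ (s.re + 1 - 1) := by
      rw [show s.re + 1 - 1 = 1 + (s.re - 1) by ring, Real.rpow_add ht0, Real.rpow_one]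
    rw [norm_mul, norm_neg, Complex.norm_real, Real.norm_of_nonneg ht0.le, normAux ht0]
    calc t * (Real.exp (-(x.re * t)) * t ^ (s.re - 1))
        = t * t ^ (s.re - 1) * Real.exp (-(x.re * t)) := by ring
      _ ≤ t * t ^ (s.re - 1) * Real.exp (-(ε * t)) := by
          have hmono : Real.exp (-(x.re * t)) ≤ Real.exp (-(ε * t)) :=
            Real.exp_le_exp.2 (by nlinarith)
          have hpos : (0:ℝ) ≤ t * t ^ (s.re - 1) := by positivity
          exact mul_le_mul_of_nonneg_left hmono hpos
      _ = t ^ (s.re + 1 - 1) * Real.exp (-(ε * t)) := by rw [hcomb]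
  · refine Eventually.of_forall fun t x hx => ?_
    have h1 : HasDerivAt (fun a : ℂ => -(a * (t : ℂ))) (-(t : ℂ)) x := by
      simpa [Pi.neg_def] using ((hasDerivAt_id x).mul_const ((t : ℂ))).neg
    have h2 := (h1.cexp).mul_const ((t : ℂ) ^ (s - 1))
    exact h2.congr_deriv (by ring)

lemma gamma_int (s : ℂ) (hs : 0 < s.re) {a : ℂ} (ha : 0 < a.re) :
    (∫ t : ℝ in Ioi 0, Complex.exp (-(a * t)) * (t : ℂ) ^ (s - 1))
      = Complex.Gamma s * a ^ (-s) := by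
  set U : Set ℂ := {z : ℂ | 0 < z.re} with hUdef
  have hUo : IsOpen U := isOpen_lt continuous_const Complex.continuous_re
  set g : ℂ → ℂ := fun a => ∫ t : ℝ in Ioi 0, Complex.exp (-(a * t)) * (t : ℂ) ^ (s - 1) with hg
  set h : ℂ → ℂ := fun a => Complex.Gamma s * a ^ (-s) with hh
  have hga : AnalyticOnNhd ℂ g U := by
    refine DifferentiableOn.analyticOnNhd (fun a haU => ?_) hUo
    exact (hasDeriv s hs haU).differentiableAt.differentiableWithinAt
  have hha : AnalyticOnNhd ℂ h U := by
    refine DifferentiableOn.analyticOnNhd (fun a haU => ?_) hUo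
    refine DifferentiableAt.differentiableWithinAt ?_
    exact (differentiableAt_id.cpow (differentiableAt_const (-s))
      (Complex.mem_slitPlane_iff.2 (Or.inl haU))).const_mul _
  have hpre : IsPreconnected U := (convex_halfSpace_re_gt 0).isPreconnected
  have h1U : (1 : ℂ) ∈ U := by simp [hUdef]
  have heqreal : ∀ r : ℝ, 0 < r → g r = h r := by
    intro r hr
    have hval := Complex.integral_cpow_mul_exp_neg_mul_Ioi hs hr
    have hcomm : g r = ∫ t : ℝ in Ioi 0, (t : ℂ) ^ (s - 1) * Complex.exp (-(r * t)) :=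
      setIntegral_congr_fun measurableSet_Ioi fun t _ => mul_comm _ _
    rw [hcomm, hval, hh]
    simp only []
    rw [Complex.cpow_neg, one_div, Complex.inv_cpow, mul_comm]
    rw [Complex.arg_ofReal_of_nonneg hr.le]
    exact Real.pi_pos.ne
  have hfreq : ∃ᶠ z in nhdsWithin (1 : ℂ) {(1 : ℂ)}ᶜ, g z = h z := by
    have htend : Tendsto (fun n : ℕ => (((1 : ℝ) + ((n : ℝ) + 1)⁻¹ : ℝ) : ℂ)) atTop
        (nhdsWithin (1 : ℂ) {(1 : ℂ)}ᶜ) := by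
      rw [tendsto_nhdsWithin_iff]
      constructor
      · have hr : Tendsto (fun n : ℕ => (1 : ℝ) + ((n : ℝ) + 1)⁻¹) atTop (nhds 1) := by
          have := tendsto_one_div_add_atTop_nhds_zero_nat (𝕜 := ℝ)
          simpa [one_div] using tendsto_const_nhds.add this
        have := (Complex.continuous_ofReal.tendsto (1 : ℝ)).comp hr
        simpa [Function.comp_def] using this
      · refine Eventually.of_forall fun n => ?_
        simp only [mem_compl_iff, mem_singleton_iff]
        intro hcon
        rw [show (1 : ℂ) = ((1 : ℝ) : ℂ) by norm_num, Complex.ofReal_inj] at hcon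
        have : ((n : ℝ) + 1)⁻¹ > 0 := by positivity
        linarith [hcon]
    refine htend.frequently ((Eventually.of_forall fun n => ?_).frequently)
    exact heqreal _ (by positivity)
  have := hga.eqOn_of_preconnected_of_frequently_eq hha hpre h1U hfreq
  exact this ha

lemma ray_integral (s : ℂ) (hs : 0 < s.re) {θ : ℝ} (hcos : Real.cos θ < 0) :
    (∫ r : ℝ in Ioi 0, Complex.exp (r * Complex.exp (θ * Complex.I)) * (r : ℂ) ^ (s - 1) *
        Complex.exp (Complex.I * s * θ))
      = Complex.Gamma s * (-Complex.exp (θ * Complex.I)) ^ (-s) *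
          Complex.exp (Complex.I * s * θ) := by
  rw [integral_mul_const]
  congr 1
  have ha : 0 < (-Complex.exp ((θ : ℂ) * Complex.I)).re := by
    rw [Complex.neg_re, Complex.exp_ofReal_mul_I_re]; linarith
  rw [← gamma_int s hs ha]
  refine setIntegral_congr_fun measurableSet_Ioi fun t _ => ?_
  congr 2
  ring

lemma cpow_neg_exp {ψ : ℝ} (hψ₁ : -Real.pi < ψ) (hψ₂ : ψ ≤ Real.pi) (s : ℂ) :
    (Complex.exp ((ψ : ℂ) * Complex.I)) ^ (-s)
      = Complex.exp (-s * ((ψ : ℂ) * Complex.I)) := by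
  rw [Complex.cpow_def_of_ne_zero (Complex.exp_ne_zero _), Complex.log_exp]
  · rw [mul_comm]
  · simpa using hψ₁
  · simpa using hψ₂

end HankelAux
/-- Hankel contour formula: the difference of the two ray integrals equals
`2i sin(πs) Γ(s) = 2πi / Γ(1-s)`. -/
theorem hankel_formula (s : ℂ) (hs : 0 < s.re)
    (θ₁ : ℝ) (hθ₁ : θ₁ ∈ Set.Ioo (-(3 * Real.pi / 2)) (-(Real.pi / 2)))
    (θ₂ : ℝ) (hθ₂ : θ₂ ∈ Set.Ioo (Real.pi / 2) (3 * Real.pi / 2)) :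
    (∫ r : ℝ in Set.Ioi 0,
        Complex.exp (r * Complex.exp (θ₂ * Complex.I)) * (r : ℂ) ^ (s - 1) *
          Complex.exp (Complex.I * s * θ₂)) -
      (∫ r : ℝ in Set.Ioi 0,
        Complex.exp (r * Complex.exp (θ₁ * Complex.I)) * (r : ℂ) ^ (s - 1) *
          Complex.exp (Complex.I * s * θ₁))
      = 2 * Complex.I * Complex.sin (Real.pi * s) * Complex.Gamma s ∧
    2 * Complex.I * Complex.sin (Real.pi * s) * Complex.Gamma s
      = 2 * Real.pi * Complex.I / Complex.Gamma (1 - s) := by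
  have hπ := Real.pi_pos
  obtain ⟨hθ₁l, hθ₁r⟩ := hθ₁
  obtain ⟨hθ₂l, hθ₂r⟩ := hθ₂
  have hcos₂ : Real.cos θ₂ < 0 :=
    Real.cos_neg_of_pi_div_two_lt_of_lt hθ₂l (by linarith)
  have hcos₁ : Real.cos θ₁ < 0 := by
    rw [← Real.cos_neg]
    exact Real.cos_neg_of_pi_div_two_lt_of_lt (by linarith) (by linarith)
  constructor
  · rw [HankelAux.ray_integral s hs hcos₂, HankelAux.ray_integral s hs hcos₁]
    have e2 : -Complex.exp ((θ₂ : ℂ) * Complex.I)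
        = Complex.exp (((θ₂ - Real.pi : ℝ) : ℂ) * Complex.I) := by
      push_cast
      rw [sub_mul, Complex.exp_sub, Complex.exp_pi_mul_I, div_neg, div_one]
    have e1 : -Complex.exp ((θ₁ : ℂ) * Complex.I)
        = Complex.exp (((θ₁ + Real.pi : ℝ) : ℂ) * Complex.I) := by
      push_cast
      rw [add_mul, Complex.exp_add, Complex.exp_pi_mul_I, mul_neg_one]
    rw [e2, e1, HankelAux.cpow_neg_exp (by linarith) (by linarith) s,
      HankelAux.cpow_neg_exp (by linarith) (by linarith) s]
    have f2 : Complex.exp (-s * (((θ₂ - Real.pi : ℝ) : ℂ) * Complex.I)) *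
        Complex.exp (Complex.I * s * θ₂)
        = Complex.exp ((Real.pi : ℂ) * s * Complex.I) := by
      rw [← Complex.exp_add]; congr 1; push_cast; ring
    have f1 : Complex.exp (-s * (((θ₁ + Real.pi : ℝ) : ℂ) * Complex.I)) *
        Complex.exp (Complex.I * s * θ₁)
        = Complex.exp (-((Real.pi : ℂ) * s) * Complex.I) := by
      rw [← Complex.exp_add]; congr 1; push_cast; ring
    rw [Complex.sin]
    linear_combination Complex.Gamma s * f2 - Complex.Gamma s * f1 +
      (Complex.exp ((Real.pi : ℂ) * s * Complex.I) -
        Complex.exp (-((Real.pi : ℂ) * s) * Complex.I)) * Complex.Gamma s * Complex.I_mul_I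
  · have hπc : (Real.pi : ℂ) ≠ 0 := Complex.ofReal_ne_zero.mpr Real.pi_ne_zero
    by_cases hsin : Complex.sin ((Real.pi : ℂ) * s) = 0
    · obtain ⟨k, hk⟩ := Complex.sin_eq_zero_iff.mp hsin
      have hsk : s = (k : ℂ) := by
        have h' : (Real.pi : ℂ) * s = (Real.pi : ℂ) * (k : ℂ) := by rw [hk]; ring
        exact mul_left_cancel₀ hπc h'
      have hkpos : 0 < k := by
        have h0 : (0 : ℝ) < s.re := hs
        rw [hsk] at h0
        simp only [Complex.intCast_re] at h0
        exact_mod_cast h0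
      have hG : Complex.Gamma (1 - s) = 0 := by
        rw [Complex.Gamma_eq_zero_iff]
        refine ⟨(k - 1).toNat, ?_⟩
        rw [hsk]
        have h1 : ((k - 1).toNat : ℤ) = k - 1 := Int.toNat_of_nonneg (by omega)
        have h2 : ((k - 1).toNat : ℂ) = ((k : ℂ) - 1) := by
          exact_mod_cast congrArg (Int.cast : ℤ → ℂ) h1
        rw [h2]; ring
      rw [hsin, hG]
      simp
    · have h := Complex.Gamma_mul_Gamma_one_sub s
      have hΓ1 : Complex.Gamma (1 - s) ≠ 0 := by
        intro h0
        rw [h0, mul_zero] at h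
        rcases div_eq_zero_iff.mp h.symm with h1 | h2
        exacts [hπc h1, hsin h2]
      rw [eq_div_iff hΓ1]
      have hrefl : Complex.Gamma s * Complex.Gamma (1 - s) *
          Complex.sin ((Real.pi : ℂ) * s) = (Real.pi : ℂ) := by
        rw [h, div_mul_cancel₀ _ hsin]
      linear_combination 2 * Complex.I * hrefl
end

section
/- Let s ∈ ℂ with Re(s) > 0 and let θ ∈ (π/2, 3π/2). Consider the closed contour C₁ consisting of: the segment from ε e^{iθ} to R e^{iθ}, the circular arc {R e^{iφ} : θ ≤ φ ≤ π}, the segment from R e^{iπ} to ε e^{iπ}, and the circular arc {ε e^{iφ} : π ≥ φ ≥ θ} (with 0 < ε < R). Then ∮_{C₁} e^t t^{s−1} dt = 0, where t^{s−1} is defined by the branch with arg t ∈ [θ, π] on the contour. -/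
open Set intervalIntegral

noncomputable def branchPow (m φ : ℝ) (a : ℂ) : ℂ :=
  (m : ℂ) ^ a * Complex.exp (a * φ * Complex.I)

noncomputable def hfun (s : ℂ) (w : ℂ) : ℂ :=
  Complex.exp (Complex.exp w) * Complex.exp ((s - 1) * w) * Complex.exp w

lemma hfun_diff (s : ℂ) : Differentiable ℂ (hfun s) := by
  unfold hfun
  fun_prop

-- pointwise identity on the rays
lemma key_line (s : ℂ) (θ x : ℝ) :
    ((Real.exp x : ℝ) : ℂ) * (Complex.exp (Real.exp x * Complex.exp (θ * Complex.I)) *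
      branchPow (Real.exp x) θ (s - 1) * Complex.exp (θ * Complex.I)) =
    hfun s (x + θ * Complex.I) := by
  have h1 : ((Real.exp x : ℝ) : ℂ) = Complex.exp x := Complex.ofReal_exp x
  have h2 : ((Real.exp x : ℝ) : ℂ) ^ (s - 1) = Complex.exp ((s - 1) * x) := by
    rw [h1, Complex.cpow_def_of_ne_zero (Complex.exp_ne_zero _),
      Complex.log_exp (by simp [Real.pi_pos] : (-Real.pi) < (x:ℂ).im)
        (by simp [Real.pi_pos.le] : (x:ℂ).im ≤ Real.pi), mul_comm]
  unfold hfun branchPow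
  rw [h2, h1, mul_add ((s:ℂ) - 1), Complex.exp_add ((s - 1) * (x:ℂ)),
    Complex.exp_add (x:ℂ)]
  ring

-- pointwise identity on the arcs
lemma key_arc (s : ℂ) (m φ : ℝ) (hm : 0 < m) :
    Complex.exp (m * Complex.exp (φ * Complex.I)) * branchPow m φ (s - 1) *
      (Complex.I * m * Complex.exp (φ * Complex.I)) =
    Complex.I * hfun s (Real.log m + φ * Complex.I) := by
  have h1 : Complex.exp ((Real.log m : ℝ) : ℂ) = (m : ℂ) := by
    rw [← Complex.ofReal_exp, Real.exp_log hm]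
  have h2 : ((m : ℝ) : ℂ) ^ (s - 1) = Complex.exp ((s - 1) * (Real.log m : ℝ)) := by
    rw [← h1, Complex.cpow_def_of_ne_zero (Complex.exp_ne_zero _),
      Complex.log_exp (by simp [Real.pi_pos]) (by simp [Real.pi_pos.le]), mul_comm]
  unfold hfun branchPow
  rw [h2, mul_add ((s:ℂ) - 1), Complex.exp_add, Complex.exp_add, h1]
  ring

/-- Cauchy's theorem for the auxiliary closed contour `C₁`: segment at angle `θ` from
`ε` to `R`, large arc from `θ` to `π`, segment at angle `π` from `R` back to `ε`, and
small arc from `π` back to `θ`; the branch of `t^(s-1)` uses `arg t ∈ [θ, π]`. -/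
theorem cauchy_contour_C1 (s : ℂ) (hs : 0 < s.re) (θ : ℝ)
    (hθ : θ ∈ Set.Ioo (Real.pi / 2) (3 * Real.pi / 2))
    (ε R : ℝ) (hε : 0 < ε) (hεR : ε < R) :
    (∫ r : ℝ in ε..R,
        Complex.exp (r * Complex.exp (θ * Complex.I)) * branchPow r θ (s - 1) *
          Complex.exp (θ * Complex.I)) +
    (∫ φ : ℝ in θ..Real.pi,
        Complex.exp (R * Complex.exp (φ * Complex.I)) * branchPow R φ (s - 1) *
          (Complex.I * R * Complex.exp (φ * Complex.I))) +
    (∫ r : ℝ in R..ε,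
        Complex.exp (r * Complex.exp (Real.pi * Complex.I)) * branchPow r Real.pi (s - 1) *
          Complex.exp (Real.pi * Complex.I)) +
    (∫ φ : ℝ in Real.pi..θ,
        Complex.exp (ε * Complex.exp (φ * Complex.I)) * branchPow ε φ (s - 1) *
          (Complex.I * ε * Complex.exp (φ * Complex.I))) = 0 := by
  have hR : 0 < R := hε.trans hεR
  set a := Real.log ε
  set b := Real.log R
  -- line integrals via substitution r = exp x
  have hline : ∀ ψ : ℝ,
      (∫ r : ℝ in ε..R,
        Complex.exp (r * Complex.exp (ψ * Complex.I)) * branchPow r ψ (s - 1) *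
          Complex.exp (ψ * Complex.I)) =
      ∫ x : ℝ in a..b, hfun s (x + ψ * Complex.I) := by
    intro ψ
    have := integral_comp_smul_deriv' (a := a) (b := b)
      (f := Real.exp) (f' := Real.exp)
      (g := fun r : ℝ => Complex.exp (r * Complex.exp (ψ * Complex.I)) *
        branchPow r ψ (s - 1) * Complex.exp (ψ * Complex.I))
      (fun x _ => Real.hasDerivAt_exp x) Real.continuous_exp.continuousOn ?_
    · rw [Real.exp_log hε, Real.exp_log hR] at this
      rw [← this]
      refine intervalIntegral.integral_congr fun x _ => ?_
      simp only [Function.comp_apply, Complex.real_smul]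
      exact key_line s ψ x
    · -- continuity of g on exp '' [[a,b]] ⊆ Ioi 0
      apply ContinuousOn.mono (s := Ioi (0:ℝ))
      · unfold branchPow
        apply ContinuousOn.mul
        apply ContinuousOn.mul
        · exact (Complex.continuous_exp.comp
            ((Complex.continuous_ofReal.mul continuous_const))).continuousOn
        · apply ContinuousOn.mul
          · apply ContinuousOn.cpow Complex.continuous_ofReal.continuousOn
              continuousOn_const
            intro r hr
            exact Or.inl (by simpa using hr)
          · exact continuousOn_const
        · exact continuousOn_const
      · rintro r ⟨x, _, rfl⟩
        exact Real.exp_pos x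
  -- arc integrals
  have harc : ∀ (m : ℝ) (hm : 0 < m) (φ₁ φ₂ : ℝ),
      (∫ φ : ℝ in φ₁..φ₂,
        Complex.exp (m * Complex.exp (φ * Complex.I)) * branchPow m φ (s - 1) *
          (Complex.I * m * Complex.exp (φ * Complex.I))) =
      Complex.I • ∫ φ : ℝ in φ₁..φ₂, hfun s (Real.log m + φ * Complex.I) := by
    intro m hm φ₁ φ₂
    rw [← intervalIntegral.integral_smul]
    refine intervalIntegral.integral_congr fun φ _ => ?_
    simpa [smul_eq_mul] using key_arc s m φ hm
  rw [intervalIntegral.integral_symm ε R, intervalIntegral.integral_symm θ Real.pi]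
  rw [hline θ, hline Real.pi, harc R hR θ Real.pi, harc ε hε θ Real.pi]
  have hrect := Complex.integral_boundary_rect_eq_zero_of_differentiableOn (hfun s)
    (⟨a, θ⟩ : ℂ) (⟨b, Real.pi⟩ : ℂ) ((hfun_diff s).differentiableOn)
  simp only [smul_eq_mul] at hrect ⊢
  linear_combination hrect
end
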